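/- Energy estimate for the time derivative of a classical solution with Neumann boundary conditions: let ℓ < r, T > 0, λ, Λ > 0, let â, ρ̂ : [ℓ, r] → ℝ be continuously differentiable with λ ≤ â(x) ≤ Λ and λ ≤ ρ̂(x) ≤ Λ, and let u : [0,T] × [ℓ,r] → ℝ be twice continuously differentiable, satisfying ρ̂(x)·∂ₜu(t,x) = (1/2)·∂ₓ(â(x)·∂ₓu(t,x)) on [0,T]×[ℓ,r], the Neumann conditions ∂ₓu(t,ℓ) = ∂ₓu(t,r) = 0 for all t ∈ [0,T], and u(0,·) = φ. Then ∫₀^T ∫_ℓ^r ρ̂(x)·(∂ₜu(t,x))² dx dt + (1/4)·∫_ℓ^r â(x)·(∂ₓu(T,x))² dx = (1/4)·∫_ℓ^r â(x)·φ'(x)² dx; in particular ∫₀^T ∫_ℓ^r (∂ₜu(t,x))² dx dt ≤ (Λ/(4λ))·∫_ℓ^r φ'(x)² dx. -/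

import Mathlib

open Set
open MeasureTheory

/-- Energy estimate for the time derivative of a classical solution of
`ρ̂ ∂ₜu = (1/2) ∂ₓ(â ∂ₓu)` with homogeneous Neumann boundary conditions:
`∫₀^T ∫_ℓ^r ρ̂ (∂ₜu)² + (1/4) ∫_ℓ^r â (∂ₓu(T,·))² = (1/4) ∫_ℓ^r â (φ')²`,
and in particular `∫₀^T ∫_ℓ^r (∂ₜu)² ≤ (Λ/(4λ)) ∫_ℓ^r (φ')²`. -/
theorem parabolic_time_derivative_energy_estimate
    (ℓ r T lam Lam : ℝ) (hlr : ℓ < r) (hT : 0 < T)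
    (hlam : 0 < lam) (hLam : 0 < Lam)
    (ahat ρhat : ℝ → ℝ)
    (haC1 : ContDiffOn ℝ 1 ahat (Icc ℓ r))
    (hρC1 : ContDiffOn ℝ 1 ρhat (Icc ℓ r))
    (habd : ∀ x ∈ Icc ℓ r, ahat x ∈ Icc lam Lam)
    (hρbd : ∀ x ∈ Icc ℓ r, ρhat x ∈ Icc lam Lam)
    (u ut ux wx uxt : ℝ → ℝ → ℝ)
    -- first-order partial derivatives of u on [0,T] × [ℓ,r]
    (hut : ∀ t ∈ Icc (0:ℝ) T, ∀ x ∈ Icc ℓ r,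
      HasDerivWithinAt (fun s => u s x) (ut t x) (Icc 0 T) t)
    (hux : ∀ t ∈ Icc (0:ℝ) T, ∀ x ∈ Icc ℓ r,
      HasDerivWithinAt (fun y => u t y) (ux t x) (Icc ℓ r) x)
    -- spatial derivative of the flux â ∂ₓu
    (hwx : ∀ t ∈ Icc (0:ℝ) T, ∀ x ∈ Icc ℓ r,
      HasDerivWithinAt (fun y => ahat y * ux t y) (wx t x) (Icc ℓ r) x)
    -- second (mixed) partial derivatives, with equality of mixed partials
    (huxt : ∀ t ∈ Icc (0:ℝ) T, ∀ x ∈ Icc ℓ r,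
      HasDerivWithinAt (fun s => ux s x) (uxt t x) (Icc 0 T) t)
    (hmixed : ∀ t ∈ Icc (0:ℝ) T, ∀ x ∈ Icc ℓ r,
      HasDerivWithinAt (fun y => ut t y) (uxt t x) (Icc ℓ r) x)
    -- continuity of the derivatives (u is of class C²)
    (hucont : ContinuousOn (fun p : ℝ × ℝ => u p.1 p.2) (Icc 0 T ×ˢ Icc ℓ r))
    (hutcont : ContinuousOn (fun p : ℝ × ℝ => ut p.1 p.2) (Icc 0 T ×ˢ Icc ℓ r))
    (huxcont : ContinuousOn (fun p : ℝ × ℝ => ux p.1 p.2) (Icc 0 T ×ˢ Icc ℓ r))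
    (hwxcont : ContinuousOn (fun p : ℝ × ℝ => wx p.1 p.2) (Icc 0 T ×ˢ Icc ℓ r))
    (huxtcont : ContinuousOn (fun p : ℝ × ℝ => uxt p.1 p.2) (Icc 0 T ×ˢ Icc ℓ r))
    -- the parabolic equation ρ̂ ∂ₜu = (1/2) ∂ₓ(â ∂ₓu)
    (hpde : ∀ t ∈ Icc (0:ℝ) T, ∀ x ∈ Icc ℓ r, ρhat x * ut t x = 1 / 2 * wx t x)
    -- homogeneous Neumann boundary conditions
    (hneum : ∀ t ∈ Icc (0:ℝ) T, ux t ℓ = 0 ∧ ux t r = 0)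
    -- initial condition u(0,·) = φ with φ of class C¹
    (φ φ' : ℝ → ℝ)
    (hφ0 : ∀ x ∈ Icc ℓ r, u 0 x = φ x)
    (hφ' : ∀ x ∈ Icc ℓ r, HasDerivWithinAt φ (φ' x) (Icc ℓ r) x)
    (hφ'cont : ContinuousOn φ' (Icc ℓ r)) :
    (∫ t in (0:ℝ)..T, ∫ x in ℓ..r, ρhat x * ut t x ^ 2) +
        1 / 4 * (∫ x in ℓ..r, ahat x * ux T x ^ 2) =
      1 / 4 * (∫ x in ℓ..r, ahat x * φ' x ^ 2) ∧
    (∫ t in (0:ℝ)..T, ∫ x in ℓ..r, ut t x ^ 2) ≤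
      Lam / (4 * lam) * ∫ x in ℓ..r, φ' x ^ 2 := by
  have hlr' : ℓ ≤ r := hlr.le
  have hT' : (0:ℝ) ≤ T := hT.le
  have hTmem : T ∈ Icc (0:ℝ) T := ⟨hT', le_rfl⟩
  have h0mem : (0:ℝ) ∈ Icc (0:ℝ) T := ⟨le_rfl, hT'⟩
  have hacont : ContinuousOn ahat (Icc ℓ r) := haC1.continuousOn
  have hρcont : ContinuousOn ρhat (Icc ℓ r) := hρC1.continuousOn
  -- slicing continuity
  have hslice : ∀ f : ℝ → ℝ → ℝ, ContinuousOn (fun p : ℝ × ℝ => f p.1 p.2) (Icc 0 T ×ˢ Icc ℓ r) →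
      ∀ t ∈ Icc (0:ℝ) T, ContinuousOn (fun x => f t x) (Icc ℓ r) := by
    intro f hf t ht
    exact hf.comp ((continuous_const.prodMk continuous_id).continuousOn)
      (fun x hx => ⟨ht, hx⟩)
  have hslicet : ∀ f : ℝ → ℝ → ℝ, ContinuousOn (fun p : ℝ × ℝ => f p.1 p.2) (Icc 0 T ×ˢ Icc ℓ r) →
      ∀ x ∈ Icc ℓ r, ContinuousOn (fun t => f t x) (Icc (0:ℝ) T) := by
    intro f hf x hx
    exact hf.comp ((continuous_id.prodMk continuous_const).continuousOn)
      (fun t ht => ⟨ht, hx⟩)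
  -- interval integrability from continuity
  have hII : ∀ f : ℝ → ℝ, ContinuousOn f (Icc ℓ r) → IntervalIntegrable f volume ℓ r := by
    intro f hf
    exact ContinuousOn.intervalIntegrable (by rw [uIcc_of_le hlr']; exact hf)
  have hIIt : ∀ f : ℝ → ℝ, ContinuousOn f (Icc (0:ℝ) T) → IntervalIntegrable f volume 0 T := by
    intro f hf
    exact ContinuousOn.intervalIntegrable (by rw [uIcc_of_le hT']; exact hf)
  -- ux 0 = φ'
  have hux0 : ∀ x ∈ Icc ℓ r, ux 0 x = φ' x := by
    intro x hx
    have ud := uniqueDiffOn_Icc hlr x hx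
    have h1 : HasDerivWithinAt φ (ux 0 x) (Icc ℓ r) x :=
      (hux 0 h0mem x hx).congr (fun y hy => (hφ0 y hy).symm) (hφ0 x hx).symm
    exact (h1.derivWithin ud).symm.trans ((hφ' x hx).derivWithin ud)
  -- spatial integration by parts for each fixed t
  have hinner : ∀ t ∈ Icc (0:ℝ) T, (∫ x in ℓ..r, ρhat x * ut t x ^ 2)
      = -(1/2) * ∫ x in ℓ..r, ahat x * ux t x * uxt t x := by
    intro t ht
    have hg : ∀ x ∈ Icc ℓ r, HasDerivWithinAt (fun y => ahat y * ux t y * ut t y)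
        (wx t x * ut t x + ahat x * ux t x * uxt t x) (Icc ℓ r) x :=
      fun x hx => (hwx t ht x hx).mul (hmixed t ht x hx)
    have hgcont : ContinuousOn (fun y => ahat y * ux t y * ut t y) (Icc ℓ r) :=
      (hacont.mul (hslice ux huxcont t ht)).mul (hslice ut hutcont t ht)
    have hc1 : ContinuousOn (fun x => wx t x * ut t x) (Icc ℓ r) :=
      (hslice wx hwxcont t ht).mul (hslice ut hutcont t ht)
    have hc2 : ContinuousOn (fun x => ahat x * ux t x * uxt t x) (Icc ℓ r) :=
      (hacont.mul (hslice ux huxcont t ht)).mul (hslice uxt huxtcont t ht)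
    have hint1 : IntervalIntegrable (fun x => wx t x * ut t x) volume ℓ r := hII _ hc1
    have hint2 : IntervalIntegrable (fun x => ahat x * ux t x * uxt t x) volume ℓ r := hII _ hc2
    have hFTC : (∫ x in ℓ..r, (wx t x * ut t x + ahat x * ux t x * uxt t x)) = 0 := by
      have := intervalIntegral.integral_eq_sub_of_hasDeriv_right_of_le hlr' hgcont
        (fun x hx => ((hg x (Ioo_subset_Icc_self hx)).hasDerivAt
          (Icc_mem_nhds hx.1 hx.2)).hasDerivWithinAt) (hint1.add hint2)
      rw [this, (hneum t ht).1, (hneum t ht).2]; ring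
    have hadd : (∫ x in ℓ..r, (wx t x * ut t x + ahat x * ux t x * uxt t x))
        = (∫ x in ℓ..r, wx t x * ut t x) + ∫ x in ℓ..r, ahat x * ux t x * uxt t x :=
      intervalIntegral.integral_add hint1 hint2
    have hwu : (∫ x in ℓ..r, wx t x * ut t x) = - ∫ x in ℓ..r, ahat x * ux t x * uxt t x := by
      rw [hadd] at hFTC; linarith
    have hpde' : (∫ x in ℓ..r, ρhat x * ut t x ^ 2) = ∫ x in ℓ..r, 1/2 * (wx t x * ut t x) := by
      refine intervalIntegral.integral_congr (fun x hx => ?_)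
      rw [uIcc_of_le hlr'] at hx
      have := hpde t ht x hx
      linear_combination ut t x * this
    rw [hpde', intervalIntegral.integral_const_mul, hwu]; ring
  -- Fubini machinery
  have hprodInt : ∀ f : ℝ → ℝ → ℝ, ContinuousOn (fun p : ℝ × ℝ => f p.1 p.2) (Icc 0 T ×ˢ Icc ℓ r) →
      MeasureTheory.Integrable (Function.uncurry f)
        ((MeasureTheory.volume.restrict (Ioc (0:ℝ) T)).prod
          (MeasureTheory.volume.restrict (Ioc ℓ r))) := by
    intro f hf
    rw [MeasureTheory.Measure.prod_restrict]
    have hK : IsCompact (Icc (0:ℝ) T ×ˢ Icc ℓ r) := isCompact_Icc.prod isCompact_Icc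
    have h1 : MeasureTheory.IntegrableOn (Function.uncurry f) (Icc 0 T ×ˢ Icc ℓ r) :=
      hf.integrableOn_compact hK
    exact h1.mono_set (prod_mono Ioc_subset_Icc_self Ioc_subset_Icc_self)
  have hmarg : ∀ f : ℝ → ℝ → ℝ, ContinuousOn (fun p : ℝ × ℝ => f p.1 p.2) (Icc 0 T ×ˢ Icc ℓ r) →
      IntervalIntegrable (fun t => ∫ x in ℓ..r, f t x) MeasureTheory.volume 0 T := by
    intro f hf
    have h1 := (hprodInt f hf).integral_prod_left
    rw [intervalIntegrable_iff_integrableOn_Ioc_of_le hT']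
    have : (fun t => ∫ x in ℓ..r, f t x)
        = fun t => ∫ x in Ioc ℓ r, f t x := funext fun t => intervalIntegral.integral_of_le hlr'
    rw [this]
    exact h1
  have hswap : ∀ f : ℝ → ℝ → ℝ, ContinuousOn (fun p : ℝ × ℝ => f p.1 p.2) (Icc 0 T ×ˢ Icc ℓ r) →
      (∫ t in (0:ℝ)..T, ∫ x in ℓ..r, f t x) = ∫ x in ℓ..r, ∫ t in (0:ℝ)..T, f t x := by
    intro f hf
    rw [intervalIntegral.integral_of_le hT', intervalIntegral.integral_of_le hlr']
    simp_rw [intervalIntegral.integral_of_le hlr', intervalIntegral.integral_of_le hT']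
    exact MeasureTheory.integral_integral_swap (hprodInt f hf)
  -- time FTC for each fixed x
  have htime : ∀ x ∈ Icc ℓ r, (∫ t in (0:ℝ)..T, ahat x * ux t x * uxt t x)
      = ahat x / 2 * ux T x ^ 2 - ahat x / 2 * φ' x ^ 2 := by
    intro x hx
    have hD : ∀ t ∈ Icc (0:ℝ) T, HasDerivWithinAt (fun s => ahat x / 2 * ux s x ^ 2)
        (ahat x * ux t x * uxt t x) (Icc 0 T) t := by
      intro t ht
      have := ((huxt t ht x hx).fun_pow 2).const_mul (ahat x / 2)
      refine this.congr_deriv ?_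
      push_cast; norm_num; ring
    have hcont : ContinuousOn (fun s => ahat x / 2 * ux s x ^ 2) (Icc (0:ℝ) T) :=
      continuousOn_const.mul ((hslicet ux huxcont x hx).pow 2)
    have hintg : IntervalIntegrable (fun t => ahat x * ux t x * uxt t x) MeasureTheory.volume 0 T :=
      hIIt _ ((continuousOn_const.mul (hslicet ux huxcont x hx)).mul (hslicet uxt huxtcont x hx))
    have := intervalIntegral.integral_eq_sub_of_hasDeriv_right_of_le hT' hcont
      (fun t ht' => ((hD t (Ioo_subset_Icc_self ht')).hasDerivAt
        (Icc_mem_nhds ht'.1 ht'.2)).hasDerivWithinAt) hintg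
    rw [this, hux0 x hx]
  -- notation
  set A := ∫ t in (0:ℝ)..T, ∫ x in ℓ..r, ρhat x * ut t x ^ 2 with hAdef
  set B := ∫ x in ℓ..r, ahat x * ux T x ^ 2 with hBdef
  set C := ∫ x in ℓ..r, ahat x * φ' x ^ 2 with hCdef
  set D := ∫ x in ℓ..r, φ' x ^ 2 with hDdef
  have hcF : ContinuousOn (fun p : ℝ × ℝ => ahat p.2 * ux p.1 p.2 * uxt p.1 p.2)
      (Icc 0 T ×ˢ Icc ℓ r) :=
    ((hacont.comp continuous_snd.continuousOn (fun p hp => hp.2)).mul huxcont).mul huxtcont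
  have hA1 : A = ∫ t in (0:ℝ)..T, -(1/2) * ∫ x in ℓ..r, ahat x * ux t x * uxt t x := by
    refine intervalIntegral.integral_congr (fun t ht => ?_)
    rw [uIcc_of_le hT'] at ht
    exact hinner t ht
  have hA2 : A = -(1/2) * ∫ x in ℓ..r, ∫ t in (0:ℝ)..T, ahat x * ux t x * uxt t x := by
    rw [hA1, intervalIntegral.integral_const_mul, hswap _ hcF]
  have hA3 : A = -(1/2) * ∫ x in ℓ..r, (ahat x / 2 * ux T x ^ 2 - ahat x / 2 * φ' x ^ 2) := by
    rw [hA2]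
    congr 1
    exact intervalIntegral.integral_congr (fun x hx => htime x (by rwa [uIcc_of_le hlr'] at hx))
  have hIB : IntervalIntegrable (fun x => ahat x * ux T x ^ 2) MeasureTheory.volume ℓ r :=
    hII _ (hacont.mul ((hslice ux huxcont T hTmem).pow 2))
  have hIC : IntervalIntegrable (fun x => ahat x * φ' x ^ 2) MeasureTheory.volume ℓ r :=
    hII _ (hacont.mul (hφ'cont.pow 2))
  have hA4 : A = -(1/2) * (1/2 * B - 1/2 * C) := by
    rw [hA3]
    congr 1
    have e1 : (∫ x in ℓ..r, (ahat x / 2 * ux T x ^ 2 - ahat x / 2 * φ' x ^ 2))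
        = ∫ x in ℓ..r, (1/2 * (ahat x * ux T x ^ 2) - 1/2 * (ahat x * φ' x ^ 2)) :=
      intervalIntegral.integral_congr (fun x _ => by ring)
    rw [e1, intervalIntegral.integral_sub (hIB.const_mul _) (hIC.const_mul _),
      intervalIntegral.integral_const_mul, intervalIntegral.integral_const_mul]
  have hfirst : A + 1/4 * B = 1/4 * C := by rw [hA4]; ring
  refine ⟨hfirst, ?_⟩
  -- second part
  have hBnn : 0 ≤ B := by
    refine intervalIntegral.integral_nonneg hlr' (fun x hx => ?_)
    exact mul_nonneg (hlam.le.trans (habd x hx).1) (sq_nonneg _)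
  have hCle : C ≤ Lam * D := by
    have : C ≤ ∫ x in ℓ..r, Lam * φ' x ^ 2 := by
      refine intervalIntegral.integral_mono_on hlr' hIC ((hII _ (hφ'cont.pow 2)).const_mul _)
        (fun x hx => ?_)
      exact mul_le_mul_of_nonneg_right (habd x hx).2 (sq_nonneg _)
    rwa [intervalIntegral.integral_const_mul] at this
  have hmono : lam * (∫ t in (0:ℝ)..T, ∫ x in ℓ..r, ut t x ^ 2) ≤ A := by
    have hIut2 : IntervalIntegrable (fun t => ∫ x in ℓ..r, ut t x ^ 2) MeasureTheory.volume 0 T :=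
      hmarg _ (hutcont.pow 2)
    have hIρut2 : IntervalIntegrable (fun t => ∫ x in ℓ..r, ρhat x * ut t x ^ 2)
        MeasureTheory.volume 0 T :=
      hmarg _ ((hρcont.comp continuous_snd.continuousOn (fun p hp => hp.2)).mul (hutcont.pow 2))
    rw [← intervalIntegral.integral_const_mul]
    refine intervalIntegral.integral_mono_on hT' (hIut2.const_mul _) hIρut2 (fun t ht => ?_)
    rw [← intervalIntegral.integral_const_mul]
    refine intervalIntegral.integral_mono_on hlr' ((hII _ ((hslice ut hutcont t ht).pow 2)).const_mul _) (hII _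
      ((hρcont.mul ((hslice ut hutcont t ht).pow 2)))) (fun x hx => ?_)
    exact mul_le_mul_of_nonneg_right (hρbd x hx).1 (sq_nonneg _)
  have hAle : A ≤ 1/4 * C := by linarith
  have hfin : lam * (∫ t in (0:ℝ)..T, ∫ x in ℓ..r, ut t x ^ 2) ≤ 1/4 * (Lam * D) := by
    nlinarith
  rw [div_mul_eq_mul_div, le_div_iff₀ (by positivity)]
  nlinarith [hfin]
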